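/- Let M = ⟨A | u = v⟩, let r compress u = v, and let P_{Δ_r} be the set of proper prefixes of elements of the prefix code Δ_r generating T(r). For t, t' ∈ A* and w, w' ∈ P_{Δ_r}: [t r w]_M = [t' r w']_M if and only if w = w' and [t r]_M = [t' r]_M. -/

import Mathlib

/-- The congruence on a free monoid generated by the single relation `u = v`. -/
def oneRelCon {A : Type*} (u v : FreeMonoid A) : Con (FreeMonoid A) :=
  conGen (fun a b => a = u ∧ b = v)

/-- `T(r) = {w ∈ A* : r·w ∈ A*·r}`. -/
def Tset {A : Type*} (r : FreeMonoid A) : Set (FreeMonoid A) :=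
  {w | ∃ y, r * w = y * r}

/-- `Δ_r`: the prefix code of irreducible elements of `T(r)`. -/
def Irr {A : Type*} (r : FreeMonoid A) : Set (FreeMonoid A) :=
  {w | w ∈ Tset r ∧ w ≠ 1 ∧ ¬ ∃ a b : FreeMonoid A,
        a ∈ Tset r ∧ b ∈ Tset r ∧ a ≠ 1 ∧ b ≠ 1 ∧ w = a * b}

/-- `P_{Δ_r}`: the set of proper prefixes of elements of `Δ_r`. -/
def ProperPrefixes {A : Type*} (r : FreeMonoid A) : Set (FreeMonoid A) :=
  {w | ∃ d ∈ Irr r, (∃ t, d = w * t) ∧ w ≠ d}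

open Relation

section Aux

variable {A : Type*}

/-- FreeMonoid analogue of `List.append_eq_append_iff`. -/
private lemma fm_eq {a b c d : FreeMonoid A} :
    a * b = c * d ↔ (∃ e, c = a * e ∧ b = e * d) ∨ ∃ e, a = c * e ∧ d = e * b := by
  constructor
  · intro h
    have h' : a.toList ++ b.toList = c.toList ++ d.toList := by
      simpa [FreeMonoid.toList_mul] using congrArg FreeMonoid.toList h
    rcases List.append_eq_append_iff.mp h' with ⟨e, he1, he2⟩ | ⟨e, he1, he2⟩
    · refine Or.inl ⟨FreeMonoid.ofList e, ?_, ?_⟩ <;>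
        apply FreeMonoid.toList.injective <;> simp [FreeMonoid.toList_mul, he1, he2]
    · refine Or.inr ⟨FreeMonoid.ofList e, ?_, ?_⟩ <;>
        apply FreeMonoid.toList.injective <;> simp [FreeMonoid.toList_mul, he1, he2]
  · rintro (⟨e, rfl, rfl⟩ | ⟨e, rfl, rfl⟩) <;> simp [mul_assoc]

private lemma fm_self_eq {x m e : FreeMonoid A} (h : x = m * (x * e)) : m = 1 ∧ e = 1 := by
  have hl := congrArg FreeMonoid.length h
  simp only [FreeMonoid.length_mul] at hl
  constructor <;> rw [← FreeMonoid.length_eq_zero] <;> omega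

/-- `r` occurs in `r * w` only as a prefix. -/
def GoodW (r w : FreeMonoid A) : Prop :=
  ∀ x s : FreeMonoid A, r * w = x * (r * s) → x = 1

private lemma good_of_properPrefix {r w : FreeMonoid A} (hw : w ∈ ProperPrefixes r) :
    GoodW r w := by
  obtain ⟨d, ⟨⟨y, hy⟩, -, hirr⟩, ⟨t, hdt⟩, hne⟩ := hw
  intro x s hx
  by_contra hx1
  have hx' : r * w = (x * r) * s := by rw [hx, mul_assoc]
  rcases fm_eq.mp hx' with ⟨e, he1, he2⟩ | ⟨e, he1, he2⟩
  · -- x * r = r * e, w = e * s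
    have he_ne : e ≠ 1 := by
      intro h1
      subst h1
      rw [mul_one] at he1
      exact hx1 (fm_self_eq (x := r) (m := x) (e := 1) (by simpa using he1)).1
    have hd : d = e * (s * t) := by rw [hdt, he2, mul_assoc]
    have hrd : x * r * (s * t) = y * r := by rw [← hy, hd, he1, mul_assoc]
    have hrd' : x * (r * (s * t)) = y * r := by rw [← hrd, mul_assoc]
    have hst : (s * t) ∈ Tset r := by
      rcases fm_eq.mp hrd' with ⟨f, hf1, hf2⟩ | ⟨f, hf1, hf2⟩
      · exact ⟨f, hf2⟩
      · have h0 := fm_self_eq hf2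
        exact ⟨1, by rw [h0.2, mul_one, one_mul]⟩
    by_cases hst1 : (s * t : FreeMonoid A) = 1
    · rw [hst1, mul_one] at hd
      have ht1 : t ≠ 1 := by
        intro h; apply hne; rw [hdt, h, mul_one]
      have hlen : d.length = w.length + t.length := by
        rw [hdt, FreeMonoid.length_mul]
      have hlen2 : w.length = e.length + s.length := by
        rw [he2, FreeMonoid.length_mul]
      have hlen3 : d.length = e.length := by rw [hd]
      have ht0 : t.length ≠ 0 := fun h => ht1 (FreeMonoid.length_eq_zero.mp h)
      omega
    · exact hirr ⟨e, s * t, ⟨x, he1.symm⟩, hst, he_ne, hst1, hd⟩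
  · -- r = (x * r) * e : impossible since x ≠ 1
    rw [mul_assoc] at he1
    exact hx1 (fm_self_eq he1).1

/-- Uniqueness of the factorization `t * r * w` with `w` good. -/
private lemma good_uniq {r t t' w w' : FreeMonoid A} (hw : GoodW r w) (hw' : GoodW r w')
    (h : t * r * w = t' * r * w') : t = t' ∧ w = w' := by
  rw [mul_assoc, mul_assoc] at h
  rcases fm_eq.mp h with ⟨e, he1, he2⟩ | ⟨e, he1, he2⟩
  · have : e = 1 := hw e w' he2
    subst this
    rw [mul_one] at he1
    rw [one_mul] at he2
    exact ⟨he1.symm, mul_left_cancel he2⟩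
  · have : e = 1 := hw' e w he2
    subst this
    rw [mul_one] at he1
    rw [one_mul] at he2
    exact ⟨he1, (mul_left_cancel he2).symm⟩

/-- One rewriting step. -/
def OneStep (u v : FreeMonoid A) (z z' : FreeMonoid A) : Prop :=
  ∃ p q, (z = p * u * q ∧ z' = p * v * q) ∨ (z = p * v * q ∧ z' = p * u * q)

private lemma oneStep_symm {u v : FreeMonoid A} : Symmetric (OneStep u v) := by
  rintro x y ⟨p, q, h | h⟩
  · exact ⟨p, q, Or.inr ⟨h.2, h.1⟩⟩
  · exact ⟨p, q, Or.inl ⟨h.2, h.1⟩⟩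

private lemma oneStep_mul_right {u v a b c : FreeMonoid A} (h : OneStep u v a b) :
    OneStep u v (a * c) (b * c) := by
  obtain ⟨p, q, h | h⟩ := h
  · exact ⟨p, q * c, Or.inl ⟨by simp only [h.1, mul_assoc], by simp only [h.2, mul_assoc]⟩⟩
  · exact ⟨p, q * c, Or.inr ⟨by simp only [h.1, mul_assoc], by simp only [h.2, mul_assoc]⟩⟩

private lemma oneStep_mul_left {u v a b c : FreeMonoid A} (h : OneStep u v a b) :
    OneStep u v (c * a) (c * b) := by
  obtain ⟨p, q, h | h⟩ := h
  · exact ⟨c * p, q, Or.inl ⟨by simp only [h.1, mul_assoc], by simp only [h.2, mul_assoc]⟩⟩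
  · exact ⟨c * p, q, Or.inr ⟨by simp only [h.1, mul_assoc], by simp only [h.2, mul_assoc]⟩⟩

/-- The reflexive-transitive closure of one-step rewriting as a congruence. -/
def stepCon (u v : FreeMonoid A) : Con (FreeMonoid A) where
  r := ReflTransGen (OneStep u v)
  iseqv := ⟨fun _ => ReflTransGen.refl, fun h => by
      haveI : Std.Symm (OneStep u v) := ⟨fun _ _ h => oneStep_symm h⟩
      exact (ReflTransGen.symmetric (r := OneStep u v)).symm _ _ h,
    fun h1 h2 => h1.trans h2⟩
  mul' := by
    intro a b c d h1 h2
    exact ReflTransGen.trans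
      (ReflTransGen.lift (· * c) (fun _ _ h => oneStep_mul_right h) _ _ h1)
      (ReflTransGen.lift (b * ·) (fun _ _ h => oneStep_mul_left h) _ _ h2)

private lemma oneRelCon_iff_rtg {u v x y : FreeMonoid A} :
    oneRelCon u v x y ↔ ReflTransGen (OneStep u v) x y := by
  constructor
  · intro h
    have hle : oneRelCon u v ≤ stepCon u v := by
      refine Con.conGen_le.mpr ?_
      rintro a b ⟨rfl, rfl⟩
      exact ReflTransGen.single ⟨1, 1, Or.inl ⟨by simp, by simp⟩⟩
    exact hle h
  · intro h
    induction h with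
    | refl => exact (oneRelCon u v).refl _
    | tail _ hstep ih =>
      refine (oneRelCon u v).trans ih ?_
      obtain ⟨p, q, ⟨rfl, rfl⟩ | ⟨rfl, rfl⟩⟩ := hstep
      · exact (oneRelCon u v).mul ((oneRelCon u v).mul ((oneRelCon u v).refl p)
          (ConGen.Rel.of u v ⟨rfl, rfl⟩)) ((oneRelCon u v).refl q)
      · exact (oneRelCon u v).mul ((oneRelCon u v).mul ((oneRelCon u v).refl p)
          ((oneRelCon u v).symm (ConGen.Rel.of u v ⟨rfl, rfl⟩))) ((oneRelCon u v).refl q)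

/-- One rewriting step (in the direction `u → v`) preserves the good suffix `w`. -/
private lemma step_dir {u v r b e t w p q : FreeMonoid A} (hb : u = b * r) (he : v = e * r)
    (hGood : GoodW r w) (hz : t * r * w = p * u * q) :
    ∃ t'' n, p * v * q = t'' * r * w ∧ t * r = p * u * n ∧ t'' * r = p * v * n := by
  have hz' : t * (r * w) = (p * b) * (r * q) := by
    rw [← mul_assoc, hz, hb, ← mul_assoc, mul_assoc]
  rcases fm_eq.mp hz' with ⟨m, hm1, hm2⟩ | ⟨m, hm1, hm2⟩
  · -- p * b = t * m, r * w = m * (r * q) : Good ⇒ m = 1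
    have hm : m = 1 := hGood m q hm2
    subst hm
    rw [mul_one] at hm1
    rw [one_mul] at hm2
    have hw : w = q := mul_left_cancel hm2
    refine ⟨p * e, 1, ?_, ?_, ?_⟩
    · rw [he, ← hw]; simp only [mul_assoc]
    · rw [mul_one, ← hm1, hb]; simp only [mul_assoc]
    · rw [mul_one, he]; simp only [mul_assoc]
  · -- t = (p * b) * m, r * q = m * (r * w)
    have hmr : (m * r) * w = r * q := by rw [hm2, ← mul_assoc]
    have hmn : ∃ n, m * r = r * n ∧ q = n * w := by
      rcases fm_eq.mp hmr with ⟨f, hf1, hf2⟩ | ⟨f, hf1, hf2⟩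
      · rw [mul_assoc] at hf1
        have h1 := fm_self_eq hf1
        refine ⟨1, by rw [h1.1, one_mul, mul_one], ?_⟩
        rw [one_mul, hf2, h1.2, one_mul]
      · exact ⟨f, hf1, hf2⟩
    obtain ⟨n, hn1, hn2⟩ := hmn
    have key : r * (n * w) = m * (r * w) := by rw [← mul_assoc, ← hn1, mul_assoc]
    refine ⟨p * e * m, n, ?_, ?_, ?_⟩
    · rw [hn2, he]; simp only [mul_assoc]; rw [key]
    · rw [hm1, hb]; simp only [mul_assoc]; rw [hn1]
    · rw [he]; simp only [mul_assoc]; rw [hn1]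

private lemma step_transport {u v r t w z z' : FreeMonoid A}
    (h2 : ∃ a, u = a * r) (h4 : ∃ a, v = a * r)
    (hGood : GoodW r w) (hstep : OneStep u v z z') (hz : z = t * r * w) :
    ∃ t'', z' = t'' * r * w ∧ OneStep u v (t * r) (t'' * r) := by
  obtain ⟨b, hb⟩ := h2
  obtain ⟨e, he⟩ := h4
  obtain ⟨p, q, ⟨hzpq, hz'⟩ | ⟨hzpq, hz'⟩⟩ := hstep
  · obtain ⟨t'', n, H1, H2, H3⟩ := step_dir hb he hGood (hz ▸ hzpq)
    exact ⟨t'', by rw [hz', H1], ⟨p, n, Or.inl ⟨H2, H3⟩⟩⟩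
  · obtain ⟨t'', n, H1, H2, H3⟩ := step_dir he hb hGood (hz ▸ hzpq)
    exact ⟨t'', by rw [hz', H1], ⟨p, n, Or.inr ⟨H2, H3⟩⟩⟩

private lemma rtg_transport {u v r t w z z' : FreeMonoid A}
    (h2 : ∃ a, u = a * r) (h4 : ∃ a, v = a * r)
    (hGood : GoodW r w) (h : ReflTransGen (OneStep u v) z z') (hz : z = t * r * w) :
    ∃ t'', z' = t'' * r * w ∧ ReflTransGen (OneStep u v) (t * r) (t'' * r) := by
  induction h with
  | refl => exact ⟨t, hz, ReflTransGen.refl⟩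
  | tail _ hstep ih =>
    obtain ⟨t₂, hz₂, hrtg⟩ := ih
    obtain ⟨t₃, hz₃, hos⟩ := step_transport h2 h4 hGood hstep hz₂
    exact ⟨t₃, hz₃, hrtg.tail hos⟩

end Aux

/-- Let `M = ⟨A | u = v⟩` with `r` compressing `u = v`.  For
`t, t' ∈ A*` and `w, w' ∈ P_{Δ_r}`:
`[t·r·w]_M = [t'·r·w']_M` iff `w = w'` and `[t·r]_M = [t'·r]_M`. -/
theorem embed_prefix {A : Type*} (u v r : FreeMonoid A) (hr : r ≠ 1)
    (h1 : ∃ a, u = r * a) (h2 : ∃ a, u = a * r)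
    (h3 : ∃ a, v = r * a) (h4 : ∃ a, v = a * r) :
    ∀ t t' w w' : FreeMonoid A,
      w ∈ ProperPrefixes r → w' ∈ ProperPrefixes r →
      (oneRelCon u v (t * r * w) (t' * r * w') ↔
        (w = w' ∧ oneRelCon u v (t * r) (t' * r))) := by
  intro t t' w w' hw hw'
  have gw := good_of_properPrefix hw
  have gw' := good_of_properPrefix hw'
  constructor
  · intro h
    obtain ⟨t'', hz, hrtg⟩ := rtg_transport h2 h4 gw (oneRelCon_iff_rtg.mp h) rfl
    obtain ⟨ht, hww⟩ := good_uniq gw' gw hz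
    refine ⟨hww.symm, ?_⟩
    rw [ht]
    exact oneRelCon_iff_rtg.mpr hrtg
  · rintro ⟨rfl, h⟩
    exact (oneRelCon u v).mul h ((oneRelCon u v).refl w)
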